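/- arXiv:1405.1094 — 2 statements merged into one kernel-verified Lean document; each statement's English description precedes it below -/
import Mathlib

section
/- In K = ℚ(ζ_{256} + ζ_{256}^{-1}), the element b_0 − b_3 + b_4 − b_{22} − b_{34} − b_{53} has absolute norm 6143, where b_0 = 1 and b_j = ζ_{256}^j + ζ_{256}^{-j}. -/
set_option maxRecDepth 8000

namespace N6143

def addPoly : List ℤ → List ℤ → List ℤ
  | [], l => l
  | l, [] => l
  | a :: as, b :: bs => (a + b) :: addPoly as bs

def neg (l : List ℤ) : List ℤ := l.map (fun c => -c)

def rot (e : ℕ) (l : List ℤ) : List ℤ := neg (l.drop (128 - e)) ++ l.take (128 - e)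

def sh (e : ℕ) (l : List ℤ) : List ℤ :=
  if e % 256 < 128 then rot (e % 256) l else neg (rot (e % 256 - 128) l)

def conjMul (j : ℕ) (acc : List ℤ) : List ℤ :=
  addPoly acc <| addPoly (neg (sh (3*j) acc)) <| addPoly (neg (sh (253*j) acc)) <|
  addPoly (sh (4*j) acc) <| addPoly (sh (252*j) acc) <| addPoly (neg (sh (22*j) acc)) <|
  addPoly (neg (sh (234*j) acc)) <| addPoly (neg (sh (34*j) acc)) <|
  addPoly (neg (sh (222*j) acc)) <| addPoly (neg (sh (53*j) acc)) (neg (sh (203*j) acc))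

def e1 : List ℤ := (1 : ℤ) :: List.replicate 127 0

variable {L : Type*} [Field L]

def phi (z : L) : List ℤ → L
  | [] => 0
  | a :: l => (a : L) + z * phi z l

@[simp] theorem phi_nil (z : L) : phi z [] = 0 := rfl
@[simp] theorem phi_cons (z : L) (a : ℤ) (l : List ℤ) :
    phi z (a :: l) = (a : L) + z * phi z l := rfl

theorem phi_addPoly (z : L) : ∀ a b : List ℤ, phi z (addPoly a b) = phi z a + phi z b
  | [], b => by simp [addPoly]
  | a :: as, [] => by simp [addPoly]
  | a :: as, b :: bs => by
    simp only [addPoly, phi_cons, phi_addPoly z as bs]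
    push_cast; ring

theorem addPoly_length : ∀ a b : List ℤ, (addPoly a b).length = max a.length b.length
  | [], b => by simp [addPoly]
  | a :: as, [] => by simp [addPoly]
  | a :: as, b :: bs => by
    simp [addPoly, addPoly_length as bs, Nat.succ_max_succ]

theorem phi_neg (z : L) : ∀ l : List ℤ, phi z (neg l) = - phi z l
  | [] => by simp [neg]
  | a :: l => by
    show ((-a : ℤ) : L) + z * phi z (neg l) = _
    rw [phi_neg z l, phi_cons]; push_cast; ring

@[simp] theorem neg_length (l : List ℤ) : (neg l).length = l.length := by simp [neg]

theorem phi_append (z : L) : ∀ a b : List ℤ, phi z (a ++ b) = phi z a + z ^ a.length * phi z b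
  | [], b => by simp
  | a :: as, b => by
    simp [phi_append z as b, pow_succ]; ring

theorem phi_replicate_zero (z : L) : ∀ k, phi z (List.replicate k 0) = 0
  | 0 => rfl
  | k + 1 => by simp [List.replicate_succ, phi_replicate_zero z k]

theorem phi_rot (z : L) (h128 : z ^ 128 = -1) {l : List ℤ} (hl : l.length = 128)
    {e : ℕ} (he : e ≤ 128) : phi z (rot e l) = z ^ e * phi z l := by
  have hsplit : l = l.take (128 - e) ++ l.drop (128 - e) := (List.take_append_drop _ _).symm
  have hlt : (l.take (128 - e)).length = 128 - e := by
    simp [List.length_take, hl, Nat.min_eq_left, Nat.sub_le]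
  have hld : (l.drop (128 - e)).length = e := by
    simp [List.length_drop, hl, Nat.sub_sub_self he]
  have h1 : phi z l = phi z (l.take (128 - e)) + z ^ (128 - e) * phi z (l.drop (128 - e)) := by
    conv_lhs => rw [hsplit]
    rw [phi_append, hlt]
  have h2 : phi z (rot e l) = - phi z (l.drop (128 - e)) + z ^ e * phi z (l.take (128 - e)) := by
    rw [rot, phi_append, phi_neg, neg_length, hld]
  have hpow : z ^ e * z ^ (128 - e) = -1 := by
    rw [← pow_add, Nat.add_sub_cancel' he, h128]
  rw [h2, h1]
  linear_combination (-(phi z (l.drop (128 - e)))) * hpow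
  

theorem rot_length {l : List ℤ} (hl : l.length = 128) {e : ℕ} (he : e ≤ 128) :
    (rot e l).length = 128 := by
  simp only [rot, List.length_append, neg_length, List.length_drop, List.length_take, hl]
  omega

theorem phi_sh (z : L) (h256 : z ^ 256 = 1) (h128 : z ^ 128 = -1) {l : List ℤ}
    (hl : l.length = 128) (e : ℕ) : phi z (sh e l) = z ^ e * phi z l := by
  have hze : z ^ e = z ^ (e % 256) := by
    conv_lhs => rw [← Nat.div_add_mod e 256]
    rw [pow_add, pow_mul, h256, one_pow, one_mul]
  have hlt : e % 256 < 256 := Nat.mod_lt _ (by norm_num)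
  rw [sh]
  split_ifs with h
  · rw [phi_rot z h128 hl (le_of_lt h), hze]
  · push_neg at h
    have h2 : e % 256 - 128 ≤ 128 := by omega
    rw [phi_neg, phi_rot z h128 hl h2, hze]
    have : z ^ (e % 256) = z ^ 128 * z ^ (e % 256 - 128) := by
      rw [← pow_add]; congr 1; omega
    rw [this, h128]; ring

theorem sh_length {l : List ℤ} (hl : l.length = 128) (e : ℕ) : (sh e l).length = 128 := by
  have hlt : e % 256 < 256 := Nat.mod_lt _ (by norm_num)
  rw [sh]
  split_ifs with h
  · exact rot_length hl (le_of_lt h)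
  · rw [neg_length, rot_length hl (by omega)]

/-- The conjugate factor. -/
def g (z : L) (j : ℕ) : L :=
  1 - z ^ (3*j) - z ^ (253*j) + z ^ (4*j) + z ^ (252*j) - z ^ (22*j) - z ^ (234*j)
    - z ^ (34*j) - z ^ (222*j) - z ^ (53*j) - z ^ (203*j)

theorem phi_conjMul (z : L) (h256 : z ^ 256 = 1) (h128 : z ^ 128 = -1) {l : List ℤ}
    (hl : l.length = 128) (j : ℕ) : phi z (conjMul j l) = g z j * phi z l := by
  rw [conjMul]
  rw [phi_addPoly, phi_addPoly, phi_addPoly, phi_addPoly, phi_addPoly, phi_addPoly,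
    phi_addPoly, phi_addPoly, phi_addPoly, phi_addPoly]
  rw [phi_neg, phi_neg, phi_neg, phi_neg, phi_neg, phi_neg, phi_neg, phi_neg]
  rw [phi_sh z h256 h128 hl, phi_sh z h256 h128 hl, phi_sh z h256 h128 hl,
    phi_sh z h256 h128 hl, phi_sh z h256 h128 hl, phi_sh z h256 h128 hl,
    phi_sh z h256 h128 hl, phi_sh z h256 h128 hl, phi_sh z h256 h128 hl,
    phi_sh z h256 h128 hl]
  rw [g]; ring

theorem conjMul_length {l : List ℤ} (hl : l.length = 128) (j : ℕ) :
    (conjMul j l).length = 128 := by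
  rw [conjMul]
  rw [addPoly_length, addPoly_length, addPoly_length, addPoly_length, addPoly_length,
    addPoly_length, addPoly_length, addPoly_length, addPoly_length, addPoly_length]
  simp [sh_length hl, hl]

@[simp] theorem e1_length : e1.length = 128 := by simp [e1]

@[simp] theorem phi_e1 (z : L) : phi z e1 = 1 := by
  simp [e1, phi_replicate_zero]

theorem phi_foldr (z : L) (h256 : z ^ 256 = 1) (h128 : z ^ 128 = -1) :
    ∀ S : List ℕ, (S.foldr conjMul e1).length = 128 ∧
      phi z (S.foldr conjMul e1) = (S.map (g z)).prod
  | [] => by simp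
  | j :: S => by
    obtain ⟨h1, h2⟩ := phi_foldr z h256 h128 S
    refine ⟨conjMul_length h1 j, ?_⟩
    rw [List.foldr_cons, phi_conjMul z h256 h128 h1 j, h2, List.map_cons, List.prod_cons]


def Slist : List ℕ := (List.range 256).filter (fun j => j % 2 = 1)

def A1 : List ℕ := [1, 3, 5, 7, 9, 11, 13, 15, 17, 19, 21, 23, 25, 27, 29, 31]

def A2 : List ℕ := [33, 35, 37, 39, 41, 43, 45, 47, 49, 51, 53, 55, 57, 59, 61, 63]

def A3 : List ℕ := [65, 67, 69, 71, 73, 75, 77, 79, 81, 83, 85, 87, 89, 91, 93, 95]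

def A4 : List ℕ := [97, 99, 101, 103, 105, 107, 109, 111, 113, 115, 117, 119, 121, 123, 125, 127]

def A5 : List ℕ := [129, 131, 133, 135, 137, 139, 141, 143, 145, 147, 149, 151, 153, 155, 157, 159]

def A6 : List ℕ := [161, 163, 165, 167, 169, 171, 173, 175, 177, 179, 181, 183, 185, 187, 189, 191]

def A7 : List ℕ := [193, 195, 197, 199, 201, 203, 205, 207, 209, 211, 213, 215, 217, 219, 221, 223]

def A8 : List ℕ := [225, 227, 229, 231, 233, 235, 237, 239, 241, 243, 245, 247, 249, 251, 253, 255]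

def r8 : List ℤ := [(-731873 : ℤ), (563770 : ℤ), (-112064 : ℤ), (-395310 : ℤ), (693225 : ℤ), (-670097 : ℤ), (315274 : ℤ), (208965 : ℤ), (-620575 : ℤ), (744578 : ℤ), (-518397 : ℤ), (31181 : ℤ), (451025 : ℤ), (-705874 : ℤ), (623782 : ℤ), (-212788 : ℤ), (-305308 : ℤ), (673449 : ℤ), (-737652 : ℤ), (437791 : ℤ), (68438 : ℤ), (-521892 : ℤ), (733989 : ℤ), (-580182 : ℤ), (133583 : ℤ), (364341 : ℤ), (-695079 : ℤ), (690912 : ℤ), (-340086 : ℤ), (-162150 : ℤ), (588067 : ℤ), (-739382 : ℤ), (516580 : ℤ), (-48958 : ℤ), (-436899 : ℤ), (726602 : ℤ), (-655850 : ℤ), (272110 : ℤ), (230593 : ℤ), (-632307 : ℤ), (714845 : ℤ), (-439508 : ℤ), (-44139 : ℤ), (523148 : ℤ), (-753234 : ℤ), (614857 : ℤ), (-194878 : ℤ), (-320623 : ℤ), (682656 : ℤ), (-695584 : ℤ), (375556 : ℤ), (124784 : ℤ), (-574921 : ℤ), (733519 : ℤ), (-539173 : ℤ), (86718 : ℤ),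 (423185 : ℤ), (-719149 : ℤ), (668550 : ℤ), (-306179 : ℤ), (-212713 : ℤ), (619728 : ℤ), (-721278 : ℤ), (483064 : ℤ), (0 : ℤ), (-483064 : ℤ), (721278 : ℤ), (-619728 : ℤ), (212713 : ℤ), (306179 : ℤ), (-668550 : ℤ), (719149 : ℤ), (-423185 : ℤ), (-86718 : ℤ), (539173 : ℤ), (-733519 : ℤ), (574921 : ℤ), (-124784 : ℤ), (-375556 : ℤ), (695584 : ℤ), (-682656 : ℤ), (320623 : ℤ), (194878 : ℤ), (-614857 : ℤ), (753234 : ℤ), (-523148 : ℤ), (44139 : ℤ), (439508 : ℤ), (-714845 : ℤ), (632307 : ℤ), (-230593 : ℤ), (-272110 : ℤ), (655850 : ℤ), (-726602 : ℤ), (436899 : ℤ), (48958 : ℤ), (-516580 : ℤ), (739382 : ℤ), (-588067 : ℤ), (162150 : ℤ), (340086 : ℤ), (-690912 : ℤ), (695079 : ℤ), (-364341 : ℤ), (-133583 : ℤ), (580182 : ℤ), (-733989 : ℤ), (521892 : ℤ), (-68438 : ℤ), (-437791 : ℤ), (737652 : ℤ), (-673449 : ℤ), (305308 : ℤ), (212788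 : ℤ), (-623782 : ℤ), (705874 : ℤ), (-451025 : ℤ), (-31181 : ℤ), (518397 : ℤ), (-744578 : ℤ), (620575 : ℤ), (-208965 : ℤ), (-315274 : ℤ), (670097 : ℤ), (-693225 : ℤ), (395310 : ℤ), (112064 : ℤ), (-563770 : ℤ)]

set_option maxRecDepth 100000 in
set_option maxHeartbeats 1600000 in
theorem chunk8 : A8.foldr conjMul e1 = r8 := by decide

def r7 : List ℤ := [(660070201 : ℤ), (521804720 : ℤ), (140152400 : ℤ), (-281777120 : ℤ), (-586927104 : ℤ), (-621660194 : ℤ), (-407307644 : ℤ), (-18951560 : ℤ), (356131434 : ℤ), (590076250 : ℤ), (570755868 : ℤ), (332596936 : ℤ), (-53260940 : ℤ), (-408069920 : ℤ), (-614376082 : ℤ), (-554796308 : ℤ), (-272130362 : ℤ), (149976994 : ℤ), (506002036 : ℤ), (660808474 : ℤ), (515232178 : ℤ), (150253404 : ℤ), (-291887752 : ℤ), (-594360878 : ℤ), (-642610250 : ℤ), (-403570224 : ℤ), (-8176802 : ℤ), (389154640 : ℤ), (602336200 : ℤ), (573589498 : ℤ), (300390726 : ℤ), (-78288446 : ℤ),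 (-433645664 : ℤ), (-602124134 : ℤ), (-536352124 : ℤ), (-239144790 : ℤ), (156508284 : ℤ), (504816526 : ℤ), (641001008 : ℤ), (510107338 : ℤ), (145955380 : ℤ), (-283600862 : ℤ), (-600649866 : ℤ), (-646256326 : ℤ), (-414674770 : ℤ), (3488606 : ℤ), (404389520 : ℤ), (629264378 : ℤ), (575084442 : ℤ), (287754358 : ℤ), (-114818766 : ℤ), (-457605742 : ℤ), (-610798250 : ℤ), (-513526396 : ℤ), (-209936734 : ℤ), (181860186 : ℤ), (503222356 : ℤ), (624811766 : ℤ), (485138380 : ℤ), (137521366 : ℤ), (-282655150 : ℤ), (-587852376 : ℤ), (-643590836 : ℤ), (-413760588 : ℤ), (0 : ℤ), (413760588 : ℤ), (643590836 : ℤ), (587852376 : ℤ), (282655150 : ℤ), (-137521366 : ℤ), (-485138380 : ℤ), (-624811766 : ℤ), (-503222356 : ℤ), (-181860186 : ℤ), (209936734 : ℤ), (513526396 : ℤ), (610798250 : ℤ), (457605742 : ℤ), (114818766 : ℤ), (-287754358 : ℤ), (-575084442 : ℤ), (-629264378 : ℤ), (-404389520 : ℤ), (-3488606 : ℤ), (414674770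 : ℤ), (646256326 : ℤ), (600649866 : ℤ), (283600862 : ℤ), (-145955380 : ℤ), (-510107338 : ℤ), (-641001008 : ℤ), (-504816526 : ℤ), (-156508284 : ℤ), (239144790 : ℤ), (536352124 : ℤ), (602124134 : ℤ), (433645664 : ℤ), (78288446 : ℤ), (-300390726 : ℤ), (-573589498 : ℤ), (-602336200 : ℤ), (-389154640 : ℤ), (8176802 : ℤ), (403570224 : ℤ), (642610250 : ℤ), (594360878 : ℤ), (291887752 : ℤ), (-150253404 : ℤ), (-515232178 : ℤ), (-660808474 : ℤ), (-506002036 : ℤ), (-149976994 : ℤ), (272130362 : ℤ), (554796308 : ℤ), (614376082 : ℤ), (408069920 : ℤ), (53260940 : ℤ), (-332596936 : ℤ), (-570755868 : ℤ), (-590076250 : ℤ), (-356131434 : ℤ), (18951560 : ℤ), (407307644 : ℤ), (621660194 : ℤ), (586927104 : ℤ), (281777120 : ℤ), (-140152400 : ℤ), (-521804720 : ℤ)]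

set_option maxRecDepth 100000 in
set_option maxHeartbeats 1600000 in
theorem chunk7 : A7.foldr conjMul r8 = r7 := by decide

def r6 : List ℤ := [(353135078103 : ℤ), (278135405462 : ℤ), (85941249344 : ℤ), (-143236667994 : ℤ), (-311314191437 : ℤ), (-348117316893 : ℤ), (-236926151218 : ℤ), (-25776458883 : ℤ), (196810253553 : ℤ), (335494017908 : ℤ), (332341481069 : ℤ), (187928946917 : ℤ), (-35594421121 : ℤ), (-244116843594 : ℤ), (-348688009604 : ℤ), (-305858847106 : ℤ), (-133528104178 : ℤ), (94748416715 : ℤ), (282840458344 : ℤ), (351140583835 : ℤ), (271239031260 : ℤ), (76833051884 : ℤ), (-149965714349 : ℤ), (-313476199962 : ℤ), (-344752029833 : ℤ), (-230265245609 : ℤ), (-18403545427 : ℤ), (201754322348 : ℤ), (336634991746 : ℤ), (329393089870 : ℤ), (182247193643 : ℤ), (-42039996934 : ℤ), (-249107649444 : ℤ), (-350314027482 : ℤ), (-303427105249 : ℤ), (-127431599826 : ℤ), (102123054702 : ℤ), (288831477834 : ℤ), (352614976707 : ℤ), (267551875147 : ℤ), (68722839327 : ℤ), (-158583250884 : ℤ),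 (-319251950691 : ℤ), (-344248956236 : ℤ), (-224102668676 : ℤ), (-8524807663 : ℤ), (210200783926 : ℤ), (340527045923 : ℤ), (326133174882 : ℤ), (174033731550 : ℤ), (-52361408966 : ℤ), (-256110237864 : ℤ), (-351696948193 : ℤ), (-297741788685 : ℤ), (-118045773905 : ℤ), (111839383372 : ℤ), (293734703083 : ℤ), (351348243327 : ℤ), (259982213346 : ℤ), (59085968681 : ℤ), (-166657025657 : ℤ), (-321536028404 : ℤ), (-340602655762 : ℤ), (-215801167688 : ℤ), (0 : ℤ), (215801167688 : ℤ), (340602655762 : ℤ), (321536028404 : ℤ), (166657025657 : ℤ), (-59085968681 : ℤ), (-259982213346 : ℤ), (-351348243327 : ℤ), (-293734703083 : ℤ), (-111839383372 : ℤ), (118045773905 : ℤ), (297741788685 : ℤ), (351696948193 : ℤ), (256110237864 : ℤ), (52361408966 : ℤ), (-174033731550 : ℤ), (-326133174882 : ℤ), (-340527045923 : ℤ), (-210200783926 : ℤ), (8524807663 : ℤ), (224102668676 : ℤ), (344248956236 : ℤ), (319251950691 : ℤ), (158583250884 : ℤ), (-68722839327 : ℤ), (-267551875147 : ℤ), (-352614976707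 : ℤ), (-288831477834 : ℤ), (-102123054702 : ℤ), (127431599826 : ℤ), (303427105249 : ℤ), (350314027482 : ℤ), (249107649444 : ℤ), (42039996934 : ℤ), (-182247193643 : ℤ), (-329393089870 : ℤ), (-336634991746 : ℤ), (-201754322348 : ℤ), (18403545427 : ℤ), (230265245609 : ℤ), (344752029833 : ℤ), (313476199962 : ℤ), (149965714349 : ℤ), (-76833051884 : ℤ), (-271239031260 : ℤ), (-351140583835 : ℤ), (-282840458344 : ℤ), (-94748416715 : ℤ), (133528104178 : ℤ), (305858847106 : ℤ), (348688009604 : ℤ), (244116843594 : ℤ), (35594421121 : ℤ), (-187928946917 : ℤ), (-332341481069 : ℤ), (-335494017908 : ℤ), (-196810253553 : ℤ), (25776458883 : ℤ), (236926151218 : ℤ), (348117316893 : ℤ), (311314191437 : ℤ), (143236667994 : ℤ), (-85941249344 : ℤ), (-278135405462 : ℤ)]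

set_option maxRecDepth 100000 in
set_option maxHeartbeats 1600000 in
theorem chunk6 : A6.foldr conjMul r7 = r6 := by decide

def r5 : List ℤ := [(-6143 : ℤ), (0 : ℤ), (0 : ℤ), (0 : ℤ), (0 : ℤ), (0 : ℤ), (0 : ℤ), (0 : ℤ), (0 : ℤ), (0 : ℤ), (0 : ℤ), (0 : ℤ), (0 : ℤ), (0 : ℤ), (0 : ℤ), (0 : ℤ), (0 : ℤ), (0 : ℤ), (0 : ℤ), (0 : ℤ), (0 : ℤ), (0 : ℤ), (0 : ℤ), (0 : ℤ), (0 : ℤ), (0 : ℤ), (0 : ℤ), (0 : ℤ), (0 : ℤ), (0 : ℤ), (0 : ℤ), (0 : ℤ), (0 : ℤ), (0 : ℤ), (0 : ℤ), (0 : ℤ), (0 : ℤ), (0 : ℤ), (0 : ℤ), (0 : ℤ), (0 : ℤ), (0 : ℤ), (0 : ℤ), (0 : ℤ), (0 : ℤ), (0 : ℤ), (0 : ℤ), (0 : ℤ), (0 : ℤ), (0 : ℤ), (0 : ℤ), (0 : ℤ), (0 : ℤ), (0 : ℤ), (0 : ℤ), (0 : ℤ), (0 : ℤ), (0 : ℤ),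 (0 : ℤ), (0 : ℤ), (0 : ℤ), (0 : ℤ), (0 : ℤ), (0 : ℤ), (0 : ℤ), (0 : ℤ), (0 : ℤ), (0 : ℤ), (0 : ℤ), (0 : ℤ), (0 : ℤ), (0 : ℤ), (0 : ℤ), (0 : ℤ), (0 : ℤ), (0 : ℤ), (0 : ℤ), (0 : ℤ), (0 : ℤ), (0 : ℤ), (0 : ℤ), (0 : ℤ), (0 : ℤ), (0 : ℤ), (0 : ℤ), (0 : ℤ), (0 : ℤ), (0 : ℤ), (0 : ℤ), (0 : ℤ), (0 : ℤ), (0 : ℤ), (0 : ℤ), (0 : ℤ), (0 : ℤ), (0 : ℤ), (0 : ℤ), (0 : ℤ), (0 : ℤ), (0 : ℤ), (0 : ℤ), (0 : ℤ), (0 : ℤ), (0 : ℤ), (0 : ℤ), (0 : ℤ), (0 : ℤ), (0 : ℤ), (0 : ℤ), (0 : ℤ), (0 : ℤ), (0 : ℤ), (0 : ℤ), (0 : ℤ), (0 : ℤ), (0 : ℤ), (0 : ℤ), (0 : ℤ), (0 : ℤ), (0 : ℤ), (0 : ℤ), (0 : ℤ), (0 : ℤ), (0 : ℤ), (0 : ℤ),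 (0 : ℤ), (0 : ℤ), (0 : ℤ)]

set_option maxRecDepth 100000 in
set_option maxHeartbeats 1600000 in
theorem chunk5 : A5.foldr conjMul r6 = r5 := by decide

def r4 : List ℤ := [(4495895839 : ℤ), (3463239110 : ℤ), (688409152 : ℤ), (-2428389330 : ℤ), (-4258481175 : ℤ), (-4116405871 : ℤ), (-1936728182 : ℤ), (1283671995 : ℤ), (3812192225 : ℤ), (4573942654 : ℤ), (3184512771 : ℤ), (191544883 : ℤ), (-2770646575 : ℤ), (-4336183982 : ℤ), (-3831892826 : ℤ), (-1307156684 : ℤ), (1875507044 : ℤ), (4136997207 : ℤ), (4531396236 : ℤ), (2689350113 : ℤ), (-420414634 : ℤ), (-3205982556 : ℤ), (-4508894427 : ℤ), (-3564058026 : ℤ), (-820600369 : ℤ), (2238146763 : ℤ), (4269870297 : ℤ), (4244272416 : ℤ), (2089148298 : ℤ), (-996087450 : ℤ), (-3612495581 : ℤ), (-4542023626 : ℤ), (-3173350940 : ℤ), (-300748994 : ℤ), (2683870557 : ℤ), (4463516086 : ℤ), (4028886550 : ℤ), (1671571730 : ℤ), (-1416532799 : ℤ), (-3884261901 : ℤ),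 (-4391292835 : ℤ), (-2699897644 : ℤ), (271145877 : ℤ), (3213698164 : ℤ), (4627116462 : ℤ), (3777066551 : ℤ), (1197135554 : ℤ), (-1969587089 : ℤ), (-4193555808 : ℤ), (-4272972512 : ℤ), (-2307040508 : ℤ), (766548112 : ℤ), (3531739703 : ℤ), (4506007217 : ℤ), (3312139739 : ℤ), (532708674 : ℤ), (-2599625455 : ℤ), (-4417732307 : ℤ), (-4106902650 : ℤ), (-1880857597 : ℤ), (1306695959 : ℤ), (3806989104 : ℤ), (4430810754 : ℤ), (2967462152 : ℤ), (0 : ℤ), (-2967462152 : ℤ), (-4430810754 : ℤ), (-3806989104 : ℤ), (-1306695959 : ℤ), (1880857597 : ℤ), (4106902650 : ℤ), (4417732307 : ℤ), (2599625455 : ℤ), (-532708674 : ℤ), (-3312139739 : ℤ), (-4506007217 : ℤ), (-3531739703 : ℤ), (-766548112 : ℤ), (2307040508 : ℤ), (4272972512 : ℤ), (4193555808 : ℤ), (1969587089 : ℤ), (-1197135554 : ℤ), (-3777066551 : ℤ), (-4627116462 : ℤ), (-3213698164 : ℤ), (-271145877 : ℤ), (2699897644 : ℤ), (4391292835 : ℤ),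 (3884261901 : ℤ), (1416532799 : ℤ), (-1671571730 : ℤ), (-4028886550 : ℤ), (-4463516086 : ℤ), (-2683870557 : ℤ), (300748994 : ℤ), (3173350940 : ℤ), (4542023626 : ℤ), (3612495581 : ℤ), (996087450 : ℤ), (-2089148298 : ℤ), (-4244272416 : ℤ), (-4269870297 : ℤ), (-2238146763 : ℤ), (820600369 : ℤ), (3564058026 : ℤ), (4508894427 : ℤ), (3205982556 : ℤ), (420414634 : ℤ), (-2689350113 : ℤ), (-4531396236 : ℤ), (-4136997207 : ℤ), (-1875507044 : ℤ), (1307156684 : ℤ), (3831892826 : ℤ), (4336183982 : ℤ), (2770646575 : ℤ), (-191544883 : ℤ), (-3184512771 : ℤ), (-4573942654 : ℤ), (-3812192225 : ℤ), (-1283671995 : ℤ), (1936728182 : ℤ), (4116405871 : ℤ), (4258481175 : ℤ), (2428389330 : ℤ), (-688409152 : ℤ), (-3463239110 : ℤ)]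

set_option maxRecDepth 100000 in
set_option maxHeartbeats 1600000 in
theorem chunk4 : A4.foldr conjMul r5 = r4 := by decide

def r3 : List ℤ := [(-4054811244743 : ℤ), (3205446394960 : ℤ), (-860956193200 : ℤ), (-1730956848160 : ℤ), (3605493199872 : ℤ), (-3818858571742 : ℤ), (2502090857092 : ℤ), (-116419433080 : ℤ), (-2187715399062 : ℤ), (3624838403750 : ℤ), (-3506153297124 : ℤ), (2043142977848 : ℤ), (327181954420 : ℤ), (-2506773518560 : ℤ), (3774112271726 : ℤ), (-3408113720044 : ℤ), (1671696813766 : ℤ), (921308674142 : ℤ), (-3108370507148 : ℤ), (4059346455782 : ℤ), (-3165071269454 : ℤ), (923006660772 : ℤ), (1793066460536 : ℤ), (-3651158873554 : ℤ), (3947554765750 : ℤ), (-2479131886032 : ℤ), (50230094686 : ℤ), (2390576953520 : ℤ), (-3700151276600 : ℤ), (3523560286214 : ℤ), (-1845300229818 : ℤ), (-480925923778 : ℤ), (2663885313952 : ℤ), (-3698848555162 : ℤ), (3294811097732 : ℤ), (-1469066444970 : ℤ), (-961430388612 : ℤ), (3101087919218 : ℤ), (-3937669192144 : ℤ), (3133589377334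 : ℤ), (-896603899340 : ℤ), (-1742160095266 : ℤ), (3689792126838 : ℤ), (-3969952610618 : ℤ), (2547347112110 : ℤ), (21430506658 : ℤ), (-2484164821360 : ℤ), (3865571074054 : ℤ), (-3532743727206 : ℤ), (1767675021194 : ℤ), (705331679538 : ℤ), (-2811072073106 : ℤ), (3752133649750 : ℤ), (-3154592650628 : ℤ), (1289641356962 : ℤ), (1117167122598 : ℤ), (-3091294932908 : ℤ), (3838218678538 : ℤ), (-2980205068340 : ℤ), (844793751338 : ℤ), (1736350586450 : ℤ), (-3611177145768 : ℤ), (3953578505548 : ℤ), (-2541731292084 : ℤ), (0 : ℤ), (2541731292084 : ℤ), (-3953578505548 : ℤ), (3611177145768 : ℤ), (-1736350586450 : ℤ), (-844793751338 : ℤ), (2980205068340 : ℤ), (-3838218678538 : ℤ), (3091294932908 : ℤ), (-1117167122598 : ℤ), (-1289641356962 : ℤ), (3154592650628 : ℤ), (-3752133649750 : ℤ), (2811072073106 : ℤ), (-705331679538 : ℤ), (-1767675021194 : ℤ), (3532743727206 : ℤ), (-3865571074054 : ℤ), (2484164821360 : ℤ), (-21430506658 : ℤ), (-2547347112110 : ℤ),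 (3969952610618 : ℤ), (-3689792126838 : ℤ), (1742160095266 : ℤ), (896603899340 : ℤ), (-3133589377334 : ℤ), (3937669192144 : ℤ), (-3101087919218 : ℤ), (961430388612 : ℤ), (1469066444970 : ℤ), (-3294811097732 : ℤ), (3698848555162 : ℤ), (-2663885313952 : ℤ), (480925923778 : ℤ), (1845300229818 : ℤ), (-3523560286214 : ℤ), (3700151276600 : ℤ), (-2390576953520 : ℤ), (-50230094686 : ℤ), (2479131886032 : ℤ), (-3947554765750 : ℤ), (3651158873554 : ℤ), (-1793066460536 : ℤ), (-923006660772 : ℤ), (3165071269454 : ℤ), (-4059346455782 : ℤ), (3108370507148 : ℤ), (-921308674142 : ℤ), (-1671696813766 : ℤ), (3408113720044 : ℤ), (-3774112271726 : ℤ), (2506773518560 : ℤ), (-327181954420 : ℤ), (-2043142977848 : ℤ), (3506153297124 : ℤ), (-3624838403750 : ℤ), (2187715399062 : ℤ), (116419433080 : ℤ), (-2502090857092 : ℤ), (3818858571742 : ℤ), (-3605493199872 : ℤ), (1730956848160 : ℤ), (860956193200 : ℤ), (-3205446394960 : ℤ)]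

set_option maxRecDepth 100000 in
set_option maxHeartbeats 1600000 in
theorem chunk3 : A3.foldr conjMul r4 = r3 := by decide

def r2 : List ℤ := [(-2169308784786729 : ℤ), (1708585795753066 : ℤ), (-527937094720192 : ℤ), (-879902851487142 : ℤ), (1912403077997491 : ℤ), (-2138484677673699 : ℤ), (1455437346932174 : ℤ), (-158344786918269 : ℤ), (-1209005387576079 : ℤ), (2060939752008844 : ℤ), (-2041573718206867 : ℤ), (1154447520911131 : ℤ), (218656528946303 : ℤ), (-1499609770197942 : ℤ), (2141990442997372 : ℤ), (-1878890897772158 : ℤ), (820263143965454 : ℤ), (582039523880245 : ℤ), (-1737488935607192 : ℤ), (2157056606498405 : ℤ), (-1666221369030180 : ℤ), (471985437723412 : ℤ), (921239383245907 : ℤ), (-1925684296366566 : ℤ), (2117811719264119 : ℤ), (-1414519403776087 : ℤ), (113052979558061 : ℤ), (1239376802183764 : ℤ), (-2067948754295678 : ℤ), (2023461751071410 : ℤ), (-1119544510548949 : ℤ), (-258251701165562 : ℤ), (1530268290534492 : ℤ), (-2151979070821926 : ℤ), (1863952707544607 : ℤ), (-782812317731118 : ℤ), (-627341925034386 : ℤ),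 (1774291768334262 : ℤ), (-2166113801911101 : ℤ), (1643571169028021 : ℤ), (-422164401985761 : ℤ), (-974176910180412 : ℤ), (1961164733094813 : ℤ), (-2114721338157748 : ℤ), (1376662693676668 : ℤ), (-52367893473809 : ℤ), (-1291263415657418 : ℤ), (2091857643104989 : ℤ), (-2003436093300126 : ℤ), (1069089212911650 : ℤ), (321656135278138 : ℤ), (-1573285191198552 : ℤ), (2160474352749599 : ℤ), (-1829027807891955 : ℤ), (725155189098415 : ℤ), (687029332054196 : ℤ), (-1804412281038869 : ℤ), (2158332258757761 : ℤ), (-1597070736584478 : ℤ), (362965105607383 : ℤ), (1023774108610951 : ℤ), (-1975195822485772 : ℤ), (2092322114345966 : ℤ), (-1325666573107384 : ℤ), (0 : ℤ), (1325666573107384 : ℤ), (-2092322114345966 : ℤ), (1975195822485772 : ℤ), (-1023774108610951 : ℤ), (-362965105607383 : ℤ), (1597070736584478 : ℤ), (-2158332258757761 : ℤ), (1804412281038869 : ℤ), (-687029332054196 : ℤ), (-725155189098415 : ℤ), (1829027807891955 : ℤ), (-2160474352749599 : ℤ), (1573285191198552 : ℤ), (-321656135278138 : ℤ), (-1069089212911650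 : ℤ), (2003436093300126 : ℤ), (-2091857643104989 : ℤ), (1291263415657418 : ℤ), (52367893473809 : ℤ), (-1376662693676668 : ℤ), (2114721338157748 : ℤ), (-1961164733094813 : ℤ), (974176910180412 : ℤ), (422164401985761 : ℤ), (-1643571169028021 : ℤ), (2166113801911101 : ℤ), (-1774291768334262 : ℤ), (627341925034386 : ℤ), (782812317731118 : ℤ), (-1863952707544607 : ℤ), (2151979070821926 : ℤ), (-1530268290534492 : ℤ), (258251701165562 : ℤ), (1119544510548949 : ℤ), (-2023461751071410 : ℤ), (2067948754295678 : ℤ), (-1239376802183764 : ℤ), (-113052979558061 : ℤ), (1414519403776087 : ℤ), (-2117811719264119 : ℤ), (1925684296366566 : ℤ), (-921239383245907 : ℤ), (-471985437723412 : ℤ), (1666221369030180 : ℤ), (-2157056606498405 : ℤ), (1737488935607192 : ℤ), (-582039523880245 : ℤ), (-820263143965454 : ℤ), (1878890897772158 : ℤ), (-2141990442997372 : ℤ), (1499609770197942 : ℤ), (-218656528946303 : ℤ), (-1154447520911131 : ℤ), (2041573718206867 : ℤ), (-2060939752008844 : ℤ), (1209005387576079 : ℤ), (158344786918269 : ℤ),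 (-1455437346932174 : ℤ), (2138484677673699 : ℤ), (-1912403077997491 : ℤ), (879902851487142 : ℤ), (527937094720192 : ℤ), (-1708585795753066 : ℤ)]

set_option maxRecDepth 100000 in
set_option maxHeartbeats 1600000 in
theorem chunk2 : A2.foldr conjMul r3 = r2 := by decide

def r1 : List ℤ := [(37736449 : ℤ), (0 : ℤ), (0 : ℤ), (0 : ℤ), (0 : ℤ), (0 : ℤ), (0 : ℤ), (0 : ℤ), (0 : ℤ), (0 : ℤ), (0 : ℤ), (0 : ℤ), (0 : ℤ), (0 : ℤ), (0 : ℤ), (0 : ℤ), (0 : ℤ), (0 : ℤ), (0 : ℤ), (0 : ℤ), (0 : ℤ), (0 : ℤ), (0 : ℤ), (0 : ℤ), (0 : ℤ), (0 : ℤ), (0 : ℤ), (0 : ℤ), (0 : ℤ), (0 : ℤ), (0 : ℤ), (0 : ℤ), (0 : ℤ), (0 : ℤ), (0 : ℤ), (0 : ℤ), (0 : ℤ), (0 : ℤ), (0 : ℤ), (0 : ℤ), (0 : ℤ), (0 : ℤ), (0 : ℤ), (0 : ℤ), (0 : ℤ), (0 : ℤ), (0 : ℤ), (0 : ℤ), (0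 : ℤ), (0 : ℤ), (0 : ℤ), (0 : ℤ), (0 : ℤ), (0 : ℤ), (0 : ℤ), (0 : ℤ), (0 : ℤ), (0 : ℤ), (0 : ℤ), (0 : ℤ), (0 : ℤ), (0 : ℤ), (0 : ℤ), (0 : ℤ), (0 : ℤ), (0 : ℤ), (0 : ℤ), (0 : ℤ), (0 : ℤ), (0 : ℤ), (0 : ℤ), (0 : ℤ), (0 : ℤ), (0 : ℤ), (0 : ℤ), (0 : ℤ), (0 : ℤ), (0 : ℤ), (0 : ℤ), (0 : ℤ), (0 : ℤ), (0 : ℤ), (0 : ℤ), (0 : ℤ), (0 : ℤ), (0 : ℤ), (0 : ℤ), (0 : ℤ), (0 : ℤ), (0 : ℤ), (0 : ℤ), (0 : ℤ), (0 : ℤ), (0 : ℤ), (0 : ℤ), (0 : ℤ), (0 : ℤ), (0 : ℤ), (0 : ℤ), (0 : ℤ), (0 : ℤ), (0 : ℤ), (0 : ℤ), (0 : ℤ), (0 : ℤ), (0 : ℤ), (0 : ℤ), (0 : ℤ), (0 : ℤ), (0 : ℤ), (0 : ℤ), (0 : ℤ), (0 : ℤ), (0 : ℤ), (0 : ℤ),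 (0 : ℤ), (0 : ℤ), (0 : ℤ), (0 : ℤ), (0 : ℤ), (0 : ℤ), (0 : ℤ), (0 : ℤ), (0 : ℤ), (0 : ℤ), (0 : ℤ), (0 : ℤ), (0 : ℤ)]

set_option maxRecDepth 100000 in
set_option maxHeartbeats 1600000 in
theorem chunk1 : A1.foldr conjMul r2 = r1 := by decide


set_option maxRecDepth 100000 in
theorem slist_split : Slist = A1 ++ (A2 ++ (A3 ++ (A4 ++ (A5 ++ (A6 ++ (A7 ++ A8)))))) := by decide

theorem compFact' : Slist.foldr conjMul e1 = r1 := by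
  rw [slist_split, List.foldr_append, List.foldr_append, List.foldr_append, List.foldr_append,
    List.foldr_append, List.foldr_append, List.foldr_append,
    chunk8, chunk7, chunk6, chunk5, chunk4, chunk3, chunk2]
  exact chunk1


set_option maxRecDepth 100000 in
theorem compFact : Slist.foldr conjMul e1 = (37736449 : ℤ) :: List.replicate 127 0 := by
  rw [compFact']; decide

end N6143

open NumberField Polynomial N6143
open scoped IntermediateField

set_option maxHeartbeats 1000000 in
set_option synthInstance.maxHeartbeats 400000 in
theorem aux_norm {L : Type*} [Field L] [Algebra ℚ L] [IsCyclotomicExtension {256} ℚ L]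
    (ζ : L) (hζ : IsPrimitiveRoot ζ 256)
    (K : IntermediateField ℚ L) (hK : K = ℚ⟮ζ + ζ⁻¹⟯)
    (x : K) (hx : (x : L) =
      1 - (ζ ^ 3 + ζ⁻¹ ^ 3) + (ζ ^ 4 + ζ⁻¹ ^ 4) - (ζ ^ 22 + ζ⁻¹ ^ 22)
        - (ζ ^ 34 + ζ⁻¹ ^ 34) - (ζ ^ 53 + ζ⁻¹ ^ 53)) :
    |Algebra.norm ℚ x| = 6143 := by
  haveI : FiniteDimensional ℚ L := IsCyclotomicExtension.finiteDimensional {256} ℚ L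
  haveI : IsGalois ℚ L := IsCyclotomicExtension.isGalois {256} ℚ L
  have irr : Irreducible (cyclotomic 256 ℚ) := cyclotomic.irreducible_rat (by norm_num)
  have hζ' : IsPrimitiveRoot ζ 256 := hζ
  have h256 : ζ ^ 256 = 1 := hζ.pow_eq_one
  have hne : ζ ≠ 0 := by
    intro h; rw [h] at h256; simp at h256
  have h128 : ζ ^ 128 = -1 := by
    have h2 : (ζ ^ 128 - 1) * (ζ ^ 128 + 1) = 0 := by linear_combination h256
    rcases mul_eq_zero.mp h2 with h | h
    · exact absurd (show ζ ^ 128 = 1 by linear_combination h)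
        (hζ.pow_ne_one_of_pos_of_lt (by norm_num) (by norm_num))
    · linear_combination h
  have hinv : ζ⁻¹ = ζ ^ 255 := by
    refine inv_eq_of_mul_eq_one_right ?_
    rw [← pow_succ']; exact h256
  -- each automorphism sends x to a conjugate factor
  have hσ : ∀ σ : L ≃ₐ[ℚ] L, σ (x : L) = g ζ (ZMod.val (Units.val (hζ'.autToPow ℚ σ))) := by
    intro σ
    have hspec := hζ'.autToPow_spec ℚ σ
    set v := ZMod.val (Units.val (hζ'.autToPow ℚ σ)) with hv
    have hvinv : ∀ a b : ℕ, a + b = 256 → ((ζ ^ v) ^ a)⁻¹ = ζ ^ (b * v) := by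
      intro a b hab
      refine inv_eq_of_mul_eq_one_right ?_
      rw [← pow_mul, ← pow_add, show v * a + b * v = 256 * v by rw [← hab]; ring,
        pow_mul, h256, one_pow]
    rw [hx]
    simp only [map_sub, map_add, map_one, map_pow, map_inv₀]
    rw [← hspec]
    simp only [inv_pow]
    rw [hvinv 3 253 (by norm_num), hvinv 4 252 (by norm_num), hvinv 22 234 (by norm_num),
      hvinv 34 222 (by norm_num), hvinv 53 203 (by norm_num)]
    rw [show (ζ ^ v) ^ 3 = ζ ^ (3 * v) from (pow_mul' ζ 3 v).symm,
      show (ζ ^ v) ^ 4 = ζ ^ (4 * v) from (pow_mul' ζ 4 v).symm,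
      show (ζ ^ v) ^ 22 = ζ ^ (22 * v) from (pow_mul' ζ 22 v).symm,
      show (ζ ^ v) ^ 34 = ζ ^ (34 * v) from (pow_mul' ζ 34 v).symm,
      show (ζ ^ v) ^ 53 = ζ ^ (53 * v) from (pow_mul' ζ 53 v).symm]
    rw [g]; ring
  -- norm as product over automorphisms
  have hGalProd : algebraMap ℚ L (Algebra.norm ℚ (x : L)) = ∏ σ : L ≃ₐ[ℚ] L, σ (x : L) :=
    Algebra.norm_eq_prod_automorphisms (K := ℚ) ((x : L))
  have hbij : Function.Bijective (hζ'.autToPow ℚ) := by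
    rw [Fintype.bijective_iff_injective_and_card]
    exact ⟨hζ'.autToPow_injective ℚ,
      Fintype.card_congr (IsCyclotomicExtension.autEquivPow L irr).toEquiv⟩
  have hprod2 : ∏ σ : L ≃ₐ[ℚ] L, σ (x : L)
      = ∏ u : (ZMod 256)ˣ, g ζ (ZMod.val (Units.val u)) :=
    Fintype.prod_bijective (hζ'.autToPow ℚ) hbij _ _ hσ
  have hprod3 : ∏ u : (ZMod 256)ˣ, g ζ (ZMod.val (Units.val u))
      = ∏ j ∈ (Finset.range 256).filter (fun j => j % 2 = 1), g ζ j := by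
    refine Finset.prod_nbij (fun u => ZMod.val (Units.val u)) ?_ ?_ ?_ ?_
    · intro u _
      have h1 : ZMod.val (Units.val u) < 256 := ZMod.val_lt _
      have h2 : Nat.Coprime (ZMod.val (Units.val u)) 256 := ZMod.val_coe_unit_coprime u
      simp only [Finset.mem_filter, Finset.mem_range]
      refine ⟨h1, ?_⟩
      rcases Nat.even_or_odd (ZMod.val (Units.val u)) with he | ho
      · exfalso
        have hdvd : (2 : ℕ) ∣ Nat.gcd (ZMod.val (Units.val u)) 256 :=
          Nat.dvd_gcd he.two_dvd (by norm_num)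
        rw [h2.gcd_eq_one] at hdvd; omega
      · exact Nat.odd_iff.mp ho
    · intro a _ b _ h
      exact Units.ext (ZMod.val_injective _ h)
    · intro j hj
      simp only [Finset.coe_filter, Finset.mem_range, Set.mem_setOf_eq] at hj
      obtain ⟨hj1, hj2⟩ := hj
      have hco : Nat.Coprime j 256 := by
        have h8 : (256 : ℕ) = 2 ^ 8 := by norm_num
        rw [h8]
        exact Nat.Coprime.pow_right 8 (Nat.coprime_two_right.mpr (Nat.odd_iff.mpr hj2))
      refine ⟨ZMod.unitOfCoprime j hco, Finset.mem_coe.mpr (Finset.mem_univ _), ?_⟩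
      show ZMod.val (Units.val (ZMod.unitOfCoprime j hco)) = j
      rw [ZMod.coe_unitOfCoprime]
      exact ZMod.val_cast_of_lt hj1
    · intro u _; rfl
  have hprod4 : ∏ j ∈ (Finset.range 256).filter (fun j => j % 2 = 1), g ζ j
      = (Slist.map (g ζ)).prod := by
    rw [Finset.prod_eq_multiset_prod, Finset.filter_val, Finset.range_val]
    rfl
  -- evaluate the product using the verified computation
  have hfold := (phi_foldr ζ h256 h128 Slist).2
  rw [compFact] at hfold
  have hval : phi ζ ((37736449 : ℤ) :: List.replicate 127 0) = (37736449 : L) := by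
    rw [phi_cons, phi_replicate_zero]; push_cast; ring
  have hprodval : (Slist.map (g ζ)).prod = (37736449 : L) := by
    rw [← hfold, hval]
  have hnormL : Algebra.norm ℚ ((x : L)) = 37736449 := by
    have heq : algebraMap ℚ L (Algebra.norm ℚ (x : L)) = algebraMap ℚ L 37736449 := by
      rw [hGalProd, hprod2, hprod3, hprod4, hprodval]; norm_num
    exact (algebraMap ℚ L).injective heq
  -- ζ is not in K : it is moved by the "complex conjugation" automorphism
  have hζK : ζ ∉ K := by
    set e := IsCyclotomicExtension.autEquivPow L irr with he
    set σ := e.symm (-1) with hσdef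
    have hz := IsCyclotomicExtension.zeta_spec 256 ℚ L
    have hzpow : σ (IsCyclotomicExtension.zeta 256 ℚ L)
        = IsCyclotomicExtension.zeta 256 ℚ L ^ (255 : ℕ) := by
      have h1 : hz.autToPow ℚ σ = -1 := by
        have := e.apply_symm_apply (-1)
        rw [← this]; rfl
      have h2 := hz.autToPow_spec ℚ σ
      rw [h1] at h2
      rw [← h2]
      have h3 : ZMod.val (Units.val (-1 : (ZMod 256)ˣ)) = 255 := by decide
      rw [h3]
    -- transport to our ζ
    obtain ⟨m, -, hm⟩ := hz.eq_pow_of_pow_eq_one hζ.pow_eq_one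
    have hσζ : σ ζ = ζ⁻¹ := by
      rw [hinv, ← hm, map_pow, hzpow, ← pow_mul, ← pow_mul, Nat.mul_comm]
    -- the fixed field of σ
    let F : IntermediateField ℚ L :=
      { toSubalgebra :=
        { carrier := {y : L | σ y = y}
          mul_mem' := fun ha hb => by
            simp only [Set.mem_setOf_eq, map_mul] at *; rw [ha, hb]
          one_mem' := by simp only [Set.mem_setOf_eq, map_one]
          add_mem' := fun ha hb => by
            simp only [Set.mem_setOf_eq, map_add] at *; rw [ha, hb]
          zero_mem' := by simp only [Set.mem_setOf_eq, map_zero]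
          algebraMap_mem' := fun r => σ.commutes r }
        inv_mem' := fun y hy => by
          simp only [Set.mem_setOf_eq, map_inv₀] at *; rw [hy] }
    have hKF : K ≤ F := by
      rw [hK]
      refine IntermediateField.adjoin_le_iff.mpr ?_
      intro y hy
      rcases hy with rfl
      show σ (ζ + ζ⁻¹) = ζ + ζ⁻¹
      rw [map_add, map_inv₀, hσζ, inv_inv]
      ring
    intro hmem
    have : σ ζ = ζ := hKF hmem
    rw [hσζ] at this
    have hsq : ζ ^ 2 = 1 := by
      have := congrArg (fun t => t * ζ) this
      rw [inv_mul_cancel₀ hne] at this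
      rw [pow_two, ← this]
    exact hζ.pow_ne_one_of_pos_of_lt (by norm_num) (by norm_num) hsq
  -- [L : K] = 2
  haveI : Module.Finite K L := FiniteDimensional.right ℚ K L
  have hint : IsIntegral K ζ := IsIntegral.of_finite K ζ
  have ht : ζ + ζ⁻¹ ∈ K := by
    rw [hK]; exact IntermediateField.mem_adjoin_simple_self ℚ (ζ + ζ⁻¹)
  have hfinrank : Module.finrank K L = 2 := by
    have hq0 : Polynomial.aeval ζ
        (X ^ 2 - C (⟨ζ + ζ⁻¹, ht⟩ : K) * X + 1 : Polynomial K) = 0 := by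
      have halg : algebraMap K L ⟨ζ + ζ⁻¹, ht⟩ = ζ + ζ⁻¹ := rfl
      simp only [map_add, map_sub, map_mul, map_one, map_pow, aeval_X, aeval_C,
        aeval_one, halg]
      have hc : ζ⁻¹ * ζ = 1 := inv_mul_cancel₀ hne
      linear_combination (-1 : L) * hc
    have hqne : (X ^ 2 - C (⟨ζ + ζ⁻¹, ht⟩ : K) * X + 1 : Polynomial K) ≠ 0 := by
      intro h0
      have := congrArg (fun p => Polynomial.coeff p 2) h0
      simp [Polynomial.coeff_one] at this
    have hdeg2 : (X ^ 2 - C (⟨ζ + ζ⁻¹, ht⟩ : K) * X + 1 : Polynomial K).natDegree ≤ 2 := by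
      compute_degree
    have hle : (minpoly K ζ).natDegree ≤ 2 :=
      le_trans (Polynomial.natDegree_le_of_dvd (minpoly.dvd K ζ hq0) hqne) hdeg2
    have hge : 2 ≤ (minpoly K ζ).natDegree := by
      refine (minpoly.two_le_natDegree_iff hint).mpr ?_
      rintro ⟨k, hk⟩
      exact hζK (hk ▸ k.2)
    have htop : IntermediateField.adjoin K ({ζ} : Set L) = ⊤ := by
      rw [eq_top_iff]
      rintro y -
      have h1 : y ∈ Algebra.adjoin ℚ ({ζ} : Set L) := by
        rw [IsCyclotomicExtension.adjoin_primitive_root_eq_top hζ']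
        trivial
      have h2 : Algebra.adjoin ℚ ({ζ} : Set L)
          ≤ Subalgebra.restrictScalars ℚ (Algebra.adjoin K ({ζ} : Set L)) :=
        Algebra.adjoin_le (fun s hs => Algebra.subset_adjoin hs)
      have h3 : Algebra.adjoin K ({ζ} : Set L)
          ≤ (IntermediateField.adjoin K ({ζ} : Set L)).toSubalgebra :=
        IntermediateField.algebra_adjoin_le_adjoin K {ζ}
      exact h3 (h2 h1)
    have h4 := IntermediateField.adjoin.finrank hint
    rw [htop, IntermediateField.finrank_top'] at h4
    rw [h4]
    exact le_antisymm hle hge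
  -- tower of norms
  have hxL : (x : L) = algebraMap K L x := rfl
  have htower : Algebra.norm ℚ ((x : L)) = Algebra.norm ℚ x ^ 2 := by
    rw [hxL, ← Algebra.norm_norm (R := ℚ) (S := K) (a := algebraMap K L x),
      Algebra.norm_algebraMap, hfinrank, map_pow]
  have hsq : Algebra.norm ℚ x ^ 2 = (6143 : ℚ) ^ 2 := by
    rw [← htower, hnormL]; norm_num
  rcases sq_eq_sq_iff_eq_or_eq_neg.mp hsq with h | h
  · rw [h]; norm_num
  · rw [h]; norm_num

instance (n : ℕ+) : NumberField (CyclotomicField n ℚ) :=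
  inferInstance

/-- In `K = ℚ(ζ_256 + ζ_256⁻¹)`, the element `b_0 - b_3 + b_4 - b_22 - b_34 - b_53`
(where `b_0 = 1`, `b_j = ζ^j + ζ^{-j}`) has absolute norm `6143`. -/
theorem norm_6143_real_cyclotomic_256 (ζ : CyclotomicField 256 ℚ)
    (hζ : IsPrimitiveRoot ζ 256)
    (K : IntermediateField ℚ (CyclotomicField 256 ℚ)) (hK : K = ℚ⟮ζ + ζ⁻¹⟯)
    (x : K) (hx : (x : CyclotomicField 256 ℚ) =
      1 - (ζ ^ 3 + ζ⁻¹ ^ 3) + (ζ ^ 4 + ζ⁻¹ ^ 4) - (ζ ^ 22 + ζ⁻¹ ^ 22)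
        - (ζ ^ 34 + ζ⁻¹ ^ 34) - (ζ ^ 53 + ζ⁻¹ ^ 53)) :
    |Algebra.norm ℚ x| = 6143 := by
  haveI : IsCyclotomicExtension {256} ℚ (CyclotomicField 256 ℚ) :=
    CyclotomicField.isCyclotomicExtension 256 ℚ
  exact aux_norm ζ hζ K hK x hx
end

section
/- Suppose K is a Galois number field, p and q distinct primes, x, y ∈ O_K with |N(x)| = p·q and |N(y)| = q, and suppose every prime of K above q is principal and generated by a Galois conjugate of y. Then there exists a Galois automorphism σ such that x/σ(y) ∈ O_K and |N(x/σ(y))| = p. -/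
open NumberField

set_option synthInstance.maxHeartbeats 1000000 in
/-- Suppose `K` is a Galois number field, `p ≠ q` are primes, `x, y ∈ O_K` with
`|N(x)| = p·q` and `|N(y)| = q`, and every prime of `K` above `q` is principal,
generated by a Galois conjugate of `y`. Then there is a Galois automorphism `σ`
such that `x/σ(y) ∈ O_K` and `|N(x/σ(y))| = p`. -/
theorem exists_conjugate_divisor (K : Type*) [Field K] [NumberField K] [IsGalois ℚ K]
    (p q : ℕ) (hp : p.Prime) (hq : q.Prime) (hpq : p ≠ q)
    (x y : 𝓞 K) (hx : (Algebra.norm ℤ x).natAbs = p * q)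
    (hy : (Algebra.norm ℤ y).natAbs = q)
    (hprin : ∀ Q : Ideal (𝓞 K), Q.IsPrime →
      Ideal.comap (algebraMap ℤ (𝓞 K)) Q = Ideal.span {(q : ℤ)} →
      ∃ σ : K ≃ₐ[ℚ] K, Q = Ideal.span {galRestrict ℤ ℚ K (𝓞 K) σ y}) :
    ∃ σ : K ≃ₐ[ℚ] K, ∃ z : 𝓞 K,
      x = galRestrict ℤ ℚ K (𝓞 K) σ y * z ∧ (Algebra.norm ℤ z).natAbs = p := by
  have hpq0 : p * q ≠ 0 := Nat.mul_ne_zero hp.ne_zero hq.ne_zero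
  set I : Ideal (𝓞 K) := Ideal.span {x} with hI
  have hIabs : Ideal.absNorm I = p * q := by
    rw [hI, Ideal.absNorm_span_singleton, hx]
  have hI0 : I ≠ 0 := by
    intro h
    exact hpq0 (by rw [← hIabs, h]; simp)
  have hassoc := UniqueFactorizationMonoid.prod_normalizedFactors hI0
  have hprodeq : (UniqueFactorizationMonoid.normalizedFactors I).prod = I :=
    associated_iff_eq.mp hassoc
  have hqdvd : q ∣ ((UniqueFactorizationMonoid.normalizedFactors I).map Ideal.absNorm).prod := by
    rw [← map_multiset_prod, hprodeq, hIabs]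
    exact ⟨p, mul_comm p q⟩
  obtain ⟨a, ha, hqa⟩ := hq.prime.exists_mem_multiset_dvd hqdvd
  obtain ⟨P, hPmem, rfl⟩ := Multiset.mem_map.mp ha
  have hPprime : Prime P := UniqueFactorizationMonoid.prime_of_normalized_factor P hPmem
  have hPisPrime : P.IsPrime := Ideal.isPrime_of_prime hPprime
  have hPdvdI : P ∣ I := UniqueFactorizationMonoid.dvd_of_mem_normalizedFactors hPmem
  have hIleP : I ≤ P := Ideal.le_of_dvd hPdvdI
  have hPnormdvd : Ideal.absNorm P ∣ p * q := hIabs ▸ map_dvd Ideal.absNorm hPdvdI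
  have hPnorm0 : Ideal.absNorm P ≠ 0 := ne_zero_of_dvd_ne_zero hpq0 hPnormdvd
  haveI : P.IsMaximal := Ideal.IsPrime.isMaximal hPisPrime hPprime.ne_zero
  haveI hfin : Finite (𝓞 K ⧸ P) := by
    rw [← Ideal.absNorm_ne_zero_iff] at *
    exact hPnorm0
  letI : Field (𝓞 K ⧸ P) := Ideal.Quotient.field P
  haveI : Fintype (𝓞 K ⧸ P) := Fintype.ofFinite _
  have hcard : Fintype.card (𝓞 K ⧸ P) = Ideal.absNorm P := by
    rw [Ideal.absNorm_apply, Submodule.cardQuot_apply, Nat.card_eq_fintype_card]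
  -- characteristic
  set r := ringChar (𝓞 K ⧸ P) with hr
  haveI : CharP (𝓞 K ⧸ P) r := ringChar.charP _
  obtain ⟨n, hrprime, hcard'⟩ := FiniteField.card (𝓞 K ⧸ P) r
  have hqr : q = r := by
    have : q ∣ r ^ (n : ℕ) := by rw [← hcard', hcard]; exact hqa
    exact ((Nat.prime_dvd_prime_iff_eq hq hrprime).mp (hq.dvd_of_dvd_pow this))
  have hqP : ((q : ℕ) : 𝓞 K) ∈ P := by
    have : ((q : ℕ) : 𝓞 K ⧸ P) = 0 := by rw [hqr]; exact CharP.cast_eq_zero (𝓞 K ⧸ P) r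
    rwa [← map_natCast (Ideal.Quotient.mk P), Ideal.Quotient.eq_zero_iff_mem] at this
  -- comap
  have hcomap : Ideal.comap (algebraMap ℤ (𝓞 K)) P = Ideal.span {(q : ℤ)} := by
    have hle : Ideal.span {(q : ℤ)} ≤ Ideal.comap (algebraMap ℤ (𝓞 K)) P := by
      rw [Ideal.span_le, Set.singleton_subset_iff]
      show algebraMap ℤ (𝓞 K) (q : ℤ) ∈ P
      rw [eq_intCast]
      exact_mod_cast hqP
    have hmax : (Ideal.span {(q : ℤ)}).IsMaximal :=
      PrincipalIdealRing.isMaximal_of_irreducible (Nat.prime_iff_prime_int.mp hq).irreducible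
    haveI : (Ideal.comap (algebraMap ℤ (𝓞 K)) P).IsPrime := Ideal.IsPrime.comap _
    exact (hmax.eq_of_le this.ne_top hle).symm
  obtain ⟨σ, hσ⟩ := hprin P hPisPrime hcomap
  have hxmem : x ∈ P := hIleP (Ideal.subset_span rfl)
  rw [hσ, Ideal.mem_span_singleton] at hxmem
  obtain ⟨z, hz⟩ := hxmem
  refine ⟨σ, z, hz, ?_⟩
  -- absNorm P = q
  have hnormP : Ideal.absNorm P = q := by
    have h1 : Ideal.absNorm P ∣ q := by
      have h2 : Nat.Coprime (Ideal.absNorm P) p := by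
        rw [hcard.symm, hcard']
        exact (Nat.Coprime.pow_left _
          ((Nat.coprime_primes hrprime hp).mpr (fun h => hpq (h ▸ hqr).symm)))
      exact h2.dvd_of_dvd_mul_left hPnormdvd
    exact Nat.dvd_antisymm h1 hqa
  have hNy : (Algebra.norm ℤ (galRestrict ℤ ℚ K (𝓞 K) σ y)).natAbs = q := by
    rw [← Ideal.absNorm_span_singleton, ← hσ, hnormP]
  have hNx : (Algebra.norm ℤ x).natAbs
      = (Algebra.norm ℤ (galRestrict ℤ ℚ K (𝓞 K) σ y)).natAbs * (Algebra.norm ℤ z).natAbs := by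
    rw [hz, map_mul, Int.natAbs_mul]
  rw [hx, hNy] at hNx
  have h3 : q * (Algebra.norm ℤ z).natAbs = q * p := by rw [← hNx, mul_comm]
  exact Nat.eq_of_mul_eq_mul_left hq.pos h3
end
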